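/- Let f̂: S¹×ℝ → S¹×ℝ be a homeomorphism of the open cylinder lifting a torus homeomorphism homotopic to [[1,1],[0,1]], and suppose there exist l > 0 and a homotopically nontrivial simple closed curve γ̂ ⊂ S¹×ℝ with f̂^l-invariant image after choosing the lift F̂₀ of the l-th power fixing γ̂. Then for this lift, every point z has vertical rotation number ρ_V(F̂₀, z) = lim (p₂(F̂₀ⁿ(ẑ)) − p₂(ẑ))/n equal to 0 whenever the limit exists; consequently the original map cannot simultaneously possess a periodic orbit with ρ_V ≠ 0 and one with ρ_V = 0. -/

import Mathlib

open Filter Set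

/-- If a lift `F` (to the plane) of a cylinder homeomorphism covering a torus
map homotopic to `[[1,1],[0,1]]` leaves invariant the lift of a rotational
invariant circle (a graph of a 1-periodic continuous function), then every
point has vertical rotation number `0` (whenever the limit exists); hence the
map cannot have both an orbit with nonzero vertical rotation number and one
with zero vertical rotation number. -/
theorem invariant_circle_forces_zero_vertical_rotation
    (F : ℝ × ℝ → ℝ × ℝ) (hF : Continuous F) (hFbij : Function.Bijective F)
    (hper1 : ∀ z : ℝ × ℝ, F (z + (1, 0)) = F z + (1, 0))
    (l : ℤ) (hper2 : ∀ z : ℝ × ℝ, F (z + (0, 1)) = F z + ((l : ℝ), 1))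
    (ψ : ℝ → ℝ) (hψ : Continuous ψ) (hψper : ∀ φ : ℝ, ψ (φ + 1) = ψ φ)
    (hinv : F '' {p : ℝ × ℝ | p.2 = ψ p.1} = {p : ℝ × ℝ | p.2 = ψ p.1}) :
    ∀ z : ℝ × ℝ, ∀ ω : ℝ,
      Tendsto (fun n : ℕ => ((F^[n] z).2 - z.2) / (n : ℝ)) atTop (nhds ω) →
      ω = 0 := by
  -- Periodicity of ψ under integer translations
  have hψP : Function.Periodic ψ 1 := hψper
  have hψint : ∀ (x : ℝ) (k : ℤ), ψ (x + k) = ψ x := fun x k => by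
    simpa using (hψP.int_mul k) x
  -- ψ is bounded
  obtain ⟨M, hM⟩ : ∃ M : ℝ, ∀ x, |ψ x| ≤ M := by
    obtain ⟨M, hM⟩ := (isCompact_Icc : IsCompact (Icc (0:ℝ) 1)).exists_bound_of_continuousOn
      hψ.continuousOn
    refine ⟨M, fun x => ?_⟩
    have h1 : ψ (Int.fract x) = ψ x := by
      simpa using (hψint (x - ⌊x⌋) ⌊x⌋).symm
    rw [← h1]
    have := hM (Int.fract x) ⟨Int.fract_nonneg x, (Int.fract_lt_one x).le⟩
    simpa using this
  -- vertical translation by an integer k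
  have T2 : ∀ (k : ℤ) (z : ℝ × ℝ), F (z + (0, (k : ℝ))) = F z + ((k : ℝ) * l, (k : ℝ)) := by
    have hdown : ∀ z : ℝ × ℝ, F (z - (0, 1)) = F z - ((l : ℝ), 1) := by
      intro z
      have := hper2 (z - (0, 1))
      simp only [sub_add_cancel] at this
      rw [this]; abel
    have eadd : ∀ (w : ℝ × ℝ) (a : ℝ), w + ((0:ℝ), a + 1) = (w + (0, a)) + (0, 1) := by
      intro w a; rw [Prod.ext_iff]; constructor <;> simp <;> ring
    have esub : ∀ (w : ℝ × ℝ) (a : ℝ), w + ((0:ℝ), a - 1) = (w + (0, a)) - (0, 1) := by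
      intro w a; rw [Prod.ext_iff]; constructor <;> simp <;> ring
    intro k
    induction k using Int.induction_on with
    | zero => simp
    | succ n ih =>
      intro z
      have ih' := ih z
      push_cast at ih' ⊢
      rw [eadd z (n:ℝ), hper2, ih', Prod.ext_iff]
      simp only [Prod.fst_add, Prod.snd_add]
      constructor <;> ring
    | pred n ih =>
      intro z
      have ih' := ih z
      push_cast at ih' ⊢
      rw [esub z (-(n:ℝ)), hdown, ih', Prod.ext_iff]
      simp only [Prod.fst_add, Prod.snd_add, Prod.fst_sub, Prod.snd_sub]
      constructor <;> ring
  -- Claim A: every integer translate of the curve is forward invariant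
  have hA : ∀ (m : ℤ) (p : ℝ × ℝ), p.2 - ψ p.1 = (m:ℝ) → (F p).2 - ψ (F p).1 = (m:ℝ) := by
    intro m p hp
    set q : ℝ × ℝ := (p.1, p.2 - m) with hq
    have hqC : q ∈ {p : ℝ × ℝ | p.2 = ψ p.1} := by
      simp only [hq, mem_setOf_eq]; linarith
    have hpq : p = q + (0, (m:ℝ)) := by rw [Prod.ext_iff]; simp [hq]
    have hFq : F q ∈ {p : ℝ × ℝ | p.2 = ψ p.1} := by
      rw [← hinv]; exact ⟨q, hqC, rfl⟩
    have hFp : F p = F q + ((m:ℝ) * l, (m:ℝ)) := by rw [hpq, T2]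
    have h1 : (F p).1 = (F q).1 + (m * l : ℤ) := by rw [hFp]; push_cast; simp
    have h2 : (F p).2 = (F q).2 + m := by rw [hFp]; simp
    rw [h1, h2, hψint]
    have := hFq
    simp only [mem_setOf_eq] at this
    linarith
  -- Claim A': every point of a translate has a preimage in the translate
  have hA' : ∀ (m : ℤ) (w : ℝ × ℝ), w.2 - ψ w.1 = (m:ℝ) →
      ∃ p : ℝ × ℝ, p.2 - ψ p.1 = (m:ℝ) ∧ F p = w := by
    intro m w hw
    set w' : ℝ × ℝ := w - ((m:ℝ) * l, (m:ℝ)) with hw'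
    have hw'C : w' ∈ {p : ℝ × ℝ | p.2 = ψ p.1} := by
      simp only [hw', mem_setOf_eq, Prod.fst_sub, Prod.snd_sub]
      have : ψ (w.1 - (m:ℝ) * l) = ψ w.1 := by
        have := hψint (w.1 - (m:ℝ)*l) (m * l)
        push_cast at this
        simpa [sub_add_cancel] using this.symm
      rw [this]; linarith
    rw [← hinv] at hw'C
    obtain ⟨c, hcC, hFc⟩ := hw'C
    refine ⟨c + (0, (m:ℝ)), ?_, ?_⟩
    · simp only [Prod.fst_add, Prod.snd_add]
      simp only [mem_setOf_eq] at hcC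
      simp [hcC]
    · rw [T2, hFc, hw']
      rw [Prod.ext_iff]
      constructor <;> simp
  -- Claim B: the open strip between consecutive translates maps into itself
  have hB : ∀ (m : ℤ) (p : ℝ × ℝ), p.2 - ψ p.1 ∈ Ioo (m:ℝ) ((m:ℝ)+1) →
      (F p).2 - ψ (F p).1 ∈ Ioo (m:ℝ) ((m:ℝ)+1) := by
    intro m
    set t : ℝ × ℝ → ℝ := fun p => (F p).2 - ψ (F p).1 with htdef
    have ht : Continuous t := (continuous_snd.comp hF).sub (hψ.comp (continuous_fst.comp hF))
    set S : Set (ℝ × ℝ) := {p : ℝ × ℝ | p.2 - ψ p.1 ∈ Ioo (m:ℝ) ((m:ℝ)+1)} with hSdef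
    have hg : Continuous (fun q : ℝ × ℝ => (q.1, q.2 + ψ q.1)) :=
      continuous_fst.prodMk (continuous_snd.add (hψ.comp continuous_fst))
    have hSeq : S = (fun q : ℝ × ℝ => (q.1, q.2 + ψ q.1)) '' (univ ×ˢ Ioo (m:ℝ) ((m:ℝ)+1)) := by
      ext p
      constructor
      · intro hp
        exact ⟨(p.1, p.2 - ψ p.1), ⟨trivial, hp⟩, by simp⟩
      · rintro ⟨⟨x, u⟩, ⟨-, hu⟩, rfl⟩
        simpa [hSdef] using hu
    have hScon : IsPreconnected S := by
      rw [hSeq]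
      exact (isPreconnected_univ.prod isPreconnected_Ioo).image _ hg.continuousOn
    have hne : ∀ p ∈ S, ∀ k : ℤ, t p ≠ (k:ℝ) := by
      intro p hp k hk
      obtain ⟨q, hq, hFq⟩ := hA' k (F p) hk
      have hqp : q = p := hFbij.injective hFq
      rw [hqp] at hq
      have h1 : (m:ℝ) < k := by rw [← hq]; exact hp.1
      have h2 : (k:ℝ) < m + 1 := by rw [← hq]; exact hp.2
      have h1' : m < k := by exact_mod_cast h1
      have h2' : k < m + 1 := by exact_mod_cast h2
      omega
    have h0 : Tendsto (fun k : ℕ => 1/((k:ℝ)+2)) atTop (nhds 0) := by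
      have := (tendsto_add_atTop_iff_nat 1).2 (tendsto_one_div_add_atTop_nhds_zero_nat (𝕜 := ℝ))
      refine this.congr fun k => ?_
      push_cast; ring_nf
    have hseq : ∀ c : ℝ, Tendsto (fun k : ℕ => ((0:ℝ), c - 1/((k:ℝ)+2))) atTop
        (nhds ((0:ℝ), c)) := by
      intro c
      have : Tendsto (fun k : ℕ => c - 1/((k:ℝ)+2)) atTop (nhds (c - 0)) :=
        tendsto_const_nhds.sub h0
      rw [sub_zero] at this
      exact tendsto_const_nhds.prodMk_nhds this
    have hseq' : ∀ c : ℝ, Tendsto (fun k : ℕ => ((0:ℝ), c + 1/((k:ℝ)+2))) atTop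
        (nhds ((0:ℝ), c)) := by
      intro c
      have : Tendsto (fun k : ℕ => c + 1/((k:ℝ)+2)) atTop (nhds (c + 0)) :=
        tendsto_const_nhds.add h0
      rw [add_zero] at this
      exact tendsto_const_nhds.prodMk_nhds this
    have hfrac : ∀ k : ℕ, 0 < 1/((k:ℝ)+2) ∧ 1/((k:ℝ)+2) < 1 := by
      intro k
      constructor
      · positivity
      · rw [div_lt_one (by positivity)]
        have : (0:ℝ) ≤ k := Nat.cast_nonneg k
        linarith
    intro p hp
    constructor
    · -- m < t p
      by_contra hle
      push_neg at hle
      have hlt : t p < m := lt_of_le_of_ne hle (hne p hp m)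
      have himg : ∀ p' ∈ S, t p' < m := by
        intro p' hp'
        by_contra hge
        push_neg at hge
        have hgt : (m:ℝ) < t p' := lt_of_le_of_ne hge (fun h => hne p' hp' m h.symm)
        have := hScon.intermediate_value hp hp' ht.continuousOn
          (⟨hlt.le, hgt.le⟩ : (m:ℝ) ∈ Icc (t p) (t p'))
        obtain ⟨q, hq, hqm⟩ := this
        exact hne q hq m hqm
      set pt : ℝ × ℝ := ((0:ℝ), ψ 0 + ((m:ℝ)+1)) with hpt
      have hptS : pt ∈ closure S := by
        refine mem_closure_of_tendsto (hseq (ψ 0 + ((m:ℝ)+1))) (Eventually.of_forall ?_)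
        intro k
        have hf := hfrac k
        simp only [hSdef, mem_setOf_eq, mem_Ioo]
        constructor <;> nlinarith [hf.1, hf.2]
      have hmem : t pt ∈ closure (t '' S) :=
        (image_closure_subset_closure_image ht) ⟨pt, hptS, rfl⟩
      have hsub : t '' S ⊆ Iio (m:ℝ) := by
        rintro - ⟨q, hq, rfl⟩; exact himg q hq
      have hle2 : t pt ≤ m := by
        have h2 := closure_mono hsub hmem
        rw [closure_Iio] at h2
        exact h2
      have hA1 : t pt = (m:ℝ) + 1 := by
        have h0' : pt.2 - ψ pt.1 = ((m+1 : ℤ):ℝ) := by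
          rw [hpt]; push_cast; simp
        have := hA (m+1) pt h0'
        push_cast at this
        exact this
      linarith
    · -- t p < m + 1
      by_contra hle
      push_neg at hle
      have hlt : ((m:ℝ)+1) < t p :=
        lt_of_le_of_ne hle (by
          intro h
          exact hne p hp (m+1) (by rw [← h]; push_cast; ring))
      have himg : ∀ p' ∈ S, ((m:ℝ)+1) < t p' := by
        intro p' hp'
        by_contra hge
        push_neg at hge
        have hgt : t p' < (m:ℝ)+1 :=
          lt_of_le_of_ne hge (fun h => hne p' hp' (m+1) (by rw [h]; push_cast; ring))
        have := hScon.intermediate_value hp' hp ht.continuousOn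
          (⟨hgt.le, hlt.le⟩ : ((m:ℝ)+1) ∈ Icc (t p') (t p))
        obtain ⟨q, hq, hqm⟩ := this
        exact hne q hq (m+1) (by rw [hqm]; push_cast; ring)
      set pt : ℝ × ℝ := ((0:ℝ), ψ 0 + (m:ℝ)) with hpt
      have hptS : pt ∈ closure S := by
        refine mem_closure_of_tendsto (hseq' (ψ 0 + (m:ℝ))) (Eventually.of_forall ?_)
        intro k
        have hf := hfrac k
        simp only [hSdef, mem_setOf_eq, mem_Ioo]
        constructor <;> nlinarith [hf.1, hf.2]
      have hmem : t pt ∈ closure (t '' S) :=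
        (image_closure_subset_closure_image ht) ⟨pt, hptS, rfl⟩
      have hsub : t '' S ⊆ Ioi ((m:ℝ)+1) := by
        rintro - ⟨q, hq, rfl⟩; exact himg q hq
      have hge2 : ((m:ℝ)+1) ≤ t pt := by
        have h2 := closure_mono hsub hmem
        rw [closure_Ioi] at h2
        exact h2
      have hA1 : t pt = (m:ℝ) := by
        have h0' : pt.2 - ψ pt.1 = ((m : ℤ):ℝ) := by
          rw [hpt]; simp
        exact hA m pt h0'
      linarith
  -- one-step invariance of the closed strip
  have hstep : ∀ (m : ℤ) (p : ℝ × ℝ), p.2 - ψ p.1 ∈ Icc (m:ℝ) ((m:ℝ)+1) →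
      (F p).2 - ψ (F p).1 ∈ Icc (m:ℝ) ((m:ℝ)+1) := by
    intro m p hp
    rcases eq_or_lt_of_le hp.1 with h1 | h1
    · rw [hA m p h1.symm]
      exact ⟨le_refl _, by linarith⟩
    rcases eq_or_lt_of_le hp.2 with h2 | h2
    · have := hA (m+1) p (by push_cast; exact h2)
      push_cast at this
      rw [this]
      exact ⟨by linarith, le_refl _⟩
    · have := hB m p ⟨h1, h2⟩
      exact ⟨this.1.le, this.2.le⟩
  -- the main argument
  intro z ω hω
  set m0 : ℤ := ⌊z.2 - ψ z.1⌋ with hm0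
  have horb : ∀ n : ℕ, (F^[n] z).2 - ψ ((F^[n] z).1) ∈ Icc (m0:ℝ) ((m0:ℝ)+1) := by
    intro n
    induction n with
    | zero =>
      simp only [Function.iterate_zero_apply]
      exact ⟨Int.floor_le _, (Int.lt_floor_add_one _).le⟩
    | succ n ih =>
      rw [Function.iterate_succ_apply']
      exact hstep m0 _ ih
  have hbound : ∀ n : ℕ, |(F^[n] z).2 - z.2| ≤ 1 + 2*M := by
    intro n
    have h1 := horb n
    have h2 := horb 0
    simp only [Function.iterate_zero_apply] at h2
    have hM1 := hM ((F^[n] z).1)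
    have hM2 := hM z.1
    rw [abs_le] at hM1 hM2 ⊢
    constructor <;> [nlinarith [h1.1, h2.2, hM1.1, hM2.2]; nlinarith [h1.2, h2.1, hM1.2, hM2.1]]
  have hzero : Tendsto (fun n : ℕ => ((F^[n] z).2 - z.2) / (n : ℝ)) atTop (nhds 0) := by
    have hh := tendsto_const_div_atTop_nhds_zero_nat (1 + 2*M)
    have hg : Tendsto (fun n : ℕ => (-(1 + 2*M)) / (n : ℝ)) atTop (nhds 0) := by
      have := hh.neg
      rw [neg_zero] at this
      refine this.congr fun n => ?_
      rw [neg_div]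
    refine tendsto_of_tendsto_of_tendsto_of_le_of_le hg hh ?_ ?_
    · intro n
      have hn : (0:ℝ) ≤ n := Nat.cast_nonneg n
      exact div_le_div_of_nonneg_right (abs_le.1 (hbound n)).1 hn
    · intro n
      have hn : (0:ℝ) ≤ n := Nat.cast_nonneg n
      exact div_le_div_of_nonneg_right (abs_le.1 (hbound n)).2 hn
  exact tendsto_nhds_unique hω hzero
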